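/- Let N be a semiprime natural number with prime factors p and q (p ≠ q). Let d ∈ ℕ, let b_1, ..., b_d be integers, and for each i let f_i = l_i X + c_i ∈ ℤ[X] be a digit polynomial of N to base b_i of degree 1 (so l_i b_i + c_i = N and l_i ≠ 0). If gcd(c_i, N) = 1 for every i, and gcd(b_j − b_k, N) = 1 for all j ≠ k in {1, ..., d}, then ν(∏_{i=1}^d f_i) = dp + dq − 2d². -/

import Mathlib

/-- `x ∈ Z_N = {0, ..., N−1}` is suitable for `g ∈ ℤ[X]` if `1 < gcd(g(x), N) < N`;
`nu N g` counts the suitable elements. -/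
def nu (N : ℕ) (g : Polynomial ℤ) : ℕ :=
  ((Finset.range N).filter
    (fun (x : ℕ) => 1 < Int.gcd (g.eval ((x : ℤ))) (N : ℤ) ∧
      Int.gcd (g.eval ((x : ℤ))) (N : ℤ) < N)).card

private lemma gcd_semiprime_iff {p q : ℕ} (hp : p.Prime) (hq : q.Prime) (hpq : p ≠ q)
    (z : ℤ) :
    (1 < Int.gcd z ((p * q : ℕ) : ℤ) ∧ Int.gcd z ((p * q : ℕ) : ℤ) < p * q) ↔
      Xor' ((p : ℤ) ∣ z) ((q : ℤ) ∣ z) := by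
  have hcop : Nat.Coprime p q := (Nat.coprime_primes hp hq).mpr hpq
  have hp2 := hp.two_le
  have hq2 := hq.two_le
  have hNpos : 0 < p * q := Nat.mul_pos hp.pos hq.pos
  set m := Int.gcd z ((p * q : ℕ) : ℤ) with hm
  have hmz : (m : ℤ) ∣ z := Int.gcd_dvd_left _ _
  have hmN : m ∣ p * q := by
    have h := Int.gcd_dvd_right (a := z) (b := ((p * q : ℕ) : ℤ))
    exact_mod_cast h
  have hmpos : 0 < m := by
    rw [hm, Int.gcd_pos_iff]
    right
    exact_mod_cast hNpos.ne'
  have hpm : p ∣ m ↔ (p : ℤ) ∣ z := by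
    constructor
    · intro h
      exact dvd_trans (by exact_mod_cast h) hmz
    · intro h
      have h2 : (p : ℤ) ∣ (m : ℤ) :=
        Int.dvd_coe_gcd h (by exact_mod_cast dvd_mul_right p q)
      exact_mod_cast h2
  have hqm : q ∣ m ↔ (q : ℤ) ∣ z := by
    constructor
    · intro h
      exact dvd_trans (by exact_mod_cast h) hmz
    · intro h
      have h2 : (q : ℤ) ∣ (m : ℤ) :=
        Int.dvd_coe_gcd h (by exact_mod_cast dvd_mul_left q p)
      exact_mod_cast h2
  constructor
  · rintro ⟨h1, h2⟩
    by_cases hP : p ∣ m <;> by_cases hQ : q ∣ m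
    · exfalso
      have hle : p * q ∣ m := hcop.mul_dvd_of_dvd_of_dvd hP hQ
      have := Nat.le_of_dvd hmpos hle
      omega
    · exact Or.inl ⟨hpm.mp hP, fun h => hQ (hqm.mpr h)⟩
    · exact Or.inr ⟨hqm.mp hQ, fun h => hP (hpm.mpr h)⟩
    · exfalso
      have hmp : Nat.Coprime m p := (hp.coprime_iff_not_dvd.mpr hP).symm
      have hmq : m ∣ q := hmp.dvd_of_dvd_mul_left hmN
      rcases (Nat.dvd_prime hq).mp hmq with h | h
      · omega
      · exact hQ (h ▸ dvd_rfl)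
  · rintro (⟨hpz, hqz⟩ | ⟨hqz, hpz⟩)
    · have hP : p ∣ m := hpm.mpr hpz
      have hQ : ¬ q ∣ m := fun h => hqz (hqm.mp h)
      have h1 : p ≤ m := Nat.le_of_dvd hmpos hP
      have h2 : m ≤ p * q := Nat.le_of_dvd hNpos hmN
      have h3 : m ≠ p * q := by
        intro h
        exact hQ (h ▸ dvd_mul_left q p)
      omega
    · have hQ : q ∣ m := hqm.mpr hqz
      have hP : ¬ p ∣ m := fun h => hpz (hpm.mp h)
      have h1 : q ≤ m := Nat.le_of_dvd hmpos hQ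
      have h2 : m ≤ p * q := Nat.le_of_dvd hNpos hmN
      have h3 : m ≠ p * q := by
        intro h
        exact hP (h ▸ dvd_mul_right p q)
      omega

private lemma dvd_prod_iff_mem {r : ℕ} [hr : Fact r.Prime] {d : ℕ} (b l c : Fin d → ℤ)
    (M : ℤ) (hrM : (r : ℤ) ∣ M)
    (hdig : ∀ i, l i * b i + c i = M) (hc : ∀ i, Int.gcd (c i) M = 1) (x : ℤ) :
    ((r : ℤ) ∣ ∏ i, (l i * x + c i)) ↔ ∃ i, ((b i : ZMod r) = (x : ZMod r)) := by
  haveI : NeZero r := ⟨hr.out.pos.ne'⟩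
  rw [← ZMod.intCast_zmod_eq_zero_iff_dvd]
  push_cast
  rw [Finset.prod_eq_zero_iff]
  simp only [Finset.mem_univ, true_and]
  refine exists_congr fun i => ?_
  have hM0 : ((M : ZMod r)) = 0 := by
    rwa [ZMod.intCast_zmod_eq_zero_iff_dvd]
  have hli : ((l i : ℤ) : ZMod r) ≠ 0 := by
    intro h
    have h1 : (r : ℤ) ∣ l i := by
      rwa [ZMod.intCast_zmod_eq_zero_iff_dvd] at h
    have h2 : (r : ℤ) ∣ c i := by
      have hd := hdig i
      have hceq : c i = M - l i * b i := by linarith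
      rw [hceq]
      exact dvd_sub hrM (h1.mul_right _)
    have h3 : (r : ℤ) ∣ ((Int.gcd (c i) M : ℕ) : ℤ) := Int.dvd_coe_gcd h2 hrM
    rw [hc i] at h3
    have h4 : (r : ℤ) ∣ 1 := by exact_mod_cast h3
    have h5 : r ∣ 1 := by exact_mod_cast h4
    have h6 := Nat.le_of_dvd one_pos h5
    have := hr.out.two_le
    omega
  have hcb : ((c i : ℤ) : ZMod r) = - ((l i : ℤ) : ZMod r) * ((b i : ℤ) : ZMod r) := by
    have h := congrArg (fun t : ℤ => (t : ZMod r)) (hdig i)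
    push_cast at h
    rw [hM0] at h
    linear_combination h
  constructor
  · intro h
    have h2 : ((l i : ℤ) : ZMod r) * ((x : ZMod r) - (b i : ZMod r)) = 0 := by
      linear_combination h - hcb
    rcases mul_eq_zero.mp h2 with h3 | h3
    · exact absurd h3 hli
    · exact (sub_eq_zero.mp h3).symm
  · intro h
    rw [hcb, ← h]
    ring

theorem nu_prod_linear_digit_polys (N p q : ℕ) (hp : p.Prime) (hq : q.Prime)
    (hpq : p ≠ q) (hN : N = p * q) (d : ℕ)
    (b l c : Fin d → ℤ)
    (hl : ∀ i, l i ≠ 0)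
    (hdig : ∀ i, l i * b i + c i = (N : ℤ))
    (hc : ∀ i, Int.gcd (c i) (N : ℤ) = 1)
    (hb : ∀ j k, j ≠ k → Int.gcd (b j - b k) (N : ℤ) = 1) :
    (nu N (∏ i, (Polynomial.C (l i) * Polynomial.X + Polynomial.C (c i))) : ℤ)
      = d * p + d * q - 2 * d ^ 2 := by
  classical
  subst hN
  haveI : Fact p.Prime := ⟨hp⟩
  haveI : Fact q.Prime := ⟨hq⟩
  haveI : NeZero p := ⟨hp.pos.ne'⟩
  haveI : NeZero q := ⟨hq.pos.ne'⟩
  haveI : NeZero (p * q) := ⟨Nat.mul_ne_zero hp.pos.ne' hq.pos.ne'⟩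
  have hcop : Nat.Coprime p q := (Nat.coprime_primes hp hq).mpr hpq
  have hpM : (p : ℤ) ∣ ((p * q : ℕ) : ℤ) := by exact_mod_cast dvd_mul_right p q
  have hqM : (q : ℤ) ∣ ((p * q : ℕ) : ℤ) := by exact_mod_cast dvd_mul_left q p
  set S : Finset (ZMod p) := Finset.univ.image (fun i => ((b i : ZMod p))) with hS
  set T : Finset (ZMod q) := Finset.univ.image (fun i => ((b i : ZMod q))) with hT
  -- injectivity of i ↦ b i mod p, mod q
  have hbne : ∀ (r : ℕ), (r : ℤ) ∣ ((p * q : ℕ) : ℤ) → 2 ≤ r →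
      ∀ j k : Fin d, j ≠ k → ¬ (r : ℤ) ∣ (b j - b k) := by
    intro r hrM hr2 j k hne hdvd
    have h2 : (r : ℤ) ∣ ((Int.gcd (b j - b k) ((p * q : ℕ) : ℤ) : ℕ) : ℤ) :=
      Int.dvd_coe_gcd hdvd hrM
    rw [hb j k hne] at h2
    have h4 : (r : ℤ) ∣ 1 := by exact_mod_cast h2
    have h5 : r ∣ 1 := by exact_mod_cast h4
    have h6 := Nat.le_of_dvd one_pos h5
    omega
  have hinjp : Function.Injective (fun i : Fin d => ((b i : ZMod p))) := by
    intro j k hjk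
    by_contra hne
    refine hbne p hpM hp.two_le j k hne ?_
    rw [← ZMod.intCast_zmod_eq_zero_iff_dvd]
    push_cast
    simpa [sub_eq_zero] using hjk
  have hinjq : Function.Injective (fun i : Fin d => ((b i : ZMod q))) := by
    intro j k hjk
    by_contra hne
    refine hbne q hqM hq.two_le j k hne ?_
    rw [← ZMod.intCast_zmod_eq_zero_iff_dvd]
    push_cast
    simpa [sub_eq_zero] using hjk
  have hScard : S.card = d := by
    rw [hS, Finset.card_image_of_injective _ hinjp, Finset.card_univ, Fintype.card_fin]
  have hTcard : T.card = d := by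
    rw [hT, Finset.card_image_of_injective _ hinjq, Finset.card_univ, Fintype.card_fin]
  have hdp : d ≤ p := by
    have h := Finset.card_le_univ S
    rwa [hScard, ZMod.card] at h
  have hdq : d ≤ q := by
    have h := Finset.card_le_univ T
    rwa [hTcard, ZMod.card] at h
  -- evaluation of the product polynomial
  have hgeval : ∀ x : ℤ,
      (∏ i, (Polynomial.C (l i) * Polynomial.X + Polynomial.C (c i))).eval x
        = ∏ i, (l i * x + c i) := by
    intro x
    simp [Polynomial.eval_prod]
  -- the suitability condition in terms of residues
  have hcond : ∀ x : ℕ,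
      ((1 < Int.gcd
          ((∏ i, (Polynomial.C (l i) * Polynomial.X + Polynomial.C (c i))).eval (x : ℤ))
          ((p * q : ℕ) : ℤ) ∧
        Int.gcd
          ((∏ i, (Polynomial.C (l i) * Polynomial.X + Polynomial.C (c i))).eval (x : ℤ))
          ((p * q : ℕ) : ℤ) < p * q) ↔
        Xor' ((x : ZMod p) ∈ S) ((x : ZMod q) ∈ T)) := by
    intro x
    rw [hgeval, gcd_semiprime_iff hp hq hpq,
      dvd_prod_iff_mem b l c _ hpM hdig hc,
      dvd_prod_iff_mem b l c _ hqM hdig hc]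
    simp only [hS, hT, Finset.mem_image, Finset.mem_univ, true_and, Int.cast_natCast]
  -- rewrite nu as count of the Xor condition
  have hnu : nu (p * q) (∏ i, (Polynomial.C (l i) * Polynomial.X + Polynomial.C (c i)))
      = ((Finset.range (p * q)).filter
          (fun x : ℕ => Xor' ((x : ZMod p) ∈ S) ((x : ZMod q) ∈ T))).card := by
    unfold nu
    congr 1
    apply Finset.filter_congr
    intro x _
    exact hcond x
  -- CRT bijection with ZMod p × ZMod q
  set e := ZMod.chineseRemainder hcop with he
  have hψ : ∀ x : ℕ, e ((x : ℕ) : ZMod (p * q)) = ((x : ZMod p), (x : ZMod q)) := by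
    intro x
    rw [map_natCast]
    ext <;> simp
  have hcount : ((Finset.range (p * q)).filter
      (fun x : ℕ => Xor' ((x : ZMod p) ∈ S) ((x : ZMod q) ∈ T))).card
      = (Finset.univ.filter
          (fun w : ZMod p × ZMod q => Xor' (w.1 ∈ S) (w.2 ∈ T))).card := by
    apply Finset.card_bij (fun x _ => (((x : ℕ) : ZMod p), ((x : ℕ) : ZMod q)))
    · intro x hx
      simp only [Finset.mem_filter, Finset.mem_range] at hx
      simp only [Finset.mem_filter, Finset.mem_univ, true_and]
      exact hx.2
    · intro x hx y hy hxy
      simp only [Finset.mem_filter, Finset.mem_range] at hx hy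
      have h1 : e ((x : ℕ) : ZMod (p * q)) = e ((y : ℕ) : ZMod (p * q)) := by
        rw [hψ, hψ, hxy]
      have h2 : ((x : ℕ) : ZMod (p * q)) = ((y : ℕ) : ZMod (p * q)) :=
        e.injective h1
      have h3 := congrArg ZMod.val h2
      rwa [ZMod.val_cast_of_lt hx.1, ZMod.val_cast_of_lt hy.1] at h3
    · intro w hw
      simp only [Finset.mem_filter, Finset.mem_univ, true_and] at hw
      refine ⟨(e.symm w).val, ?_, ?_⟩
      · have hlt : (e.symm w).val < p * q := ZMod.val_lt _
        have hcast : (((e.symm w).val : ℕ) : ZMod (p * q)) = e.symm w := by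
          simp [ZMod.natCast_val, ZMod.cast_id]
        have hψw : ((((e.symm w).val : ℕ) : ZMod p), (((e.symm w).val : ℕ) : ZMod q)) = w := by
          rw [← hψ, hcast, RingEquiv.apply_symm_apply]
        simp only [Finset.mem_filter, Finset.mem_range]
        refine ⟨hlt, ?_⟩
        have h1 : (((e.symm w).val : ℕ) : ZMod p) = w.1 := congrArg Prod.fst hψw
        have h2 : (((e.symm w).val : ℕ) : ZMod q) = w.2 := congrArg Prod.snd hψw
        rw [h1, h2]
        exact hw
      · have hcast : (((e.symm w).val : ℕ) : ZMod (p * q)) = e.symm w := by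
          simp [ZMod.natCast_val, ZMod.cast_id]
        rw [← hψ, hcast, RingEquiv.apply_symm_apply]
  -- count pairs with the Xor condition
  have hWcard : (Finset.univ.filter
      (fun w : ZMod p × ZMod q => Xor' (w.1 ∈ S) (w.2 ∈ T))).card
      = d * (q - d) + (p - d) * d := by
    have hset : Finset.univ.filter
        (fun w : ZMod p × ZMod q => Xor' (w.1 ∈ S) (w.2 ∈ T))
        = (S ×ˢ Tᶜ) ∪ (Sᶜ ×ˢ T) := by
      ext w
      rw [Finset.mem_filter]
      simp only [Finset.mem_filter, Finset.mem_univ, true_and, Finset.mem_union,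
        Finset.mem_product, Finset.mem_compl, Xor', Xor]
      tauto
    have hdisj : Disjoint (S ×ˢ Tᶜ) (Sᶜ ×ˢ T) := by
      rw [Finset.disjoint_left]
      intro w hw hw'
      simp only [Finset.mem_product, Finset.mem_compl] at hw hw'
      exact hw'.1 hw.1
    rw [hset, Finset.card_union_of_disjoint hdisj, Finset.card_product,
      Finset.card_product, Finset.card_compl, Finset.card_compl]
    rw [ZMod.card, ZMod.card, hScard, hTcard]
  rw [hnu, hcount, hWcard]
  push_cast [Nat.cast_sub hdq, Nat.cast_sub hdp]
  ring
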